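/- Let B₁, B₂ ∈ ℝ² be anchors, P_f ∈ ℝ² a final point, and P₀, P₁ ∈ ℝ² measurement points with P₀ ≠ B₁ and P₁ ≠ B₂. Then the vectors γ(B₁, P₀, P_f) and γ(B₂, P₁, P_f) in ℝ³ are linearly dependent over ℝ if and only if the four points B₁, P₀, B₂, P₁ are collinear (all lie on one common affine line). -/

import Mathlib

/-- The rank-one information vector of a single range measurement from anchor `B`
taken at point `P`, for final point `Pf` (plane identified with Euclidean `ℝ²`). -/
noncomputable def gamma (B P Pf : EuclideanSpace ℝ (Fin 2)) : Fin 3 → ℝ :=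
  ![(P 0 - B 0) / ‖P - B‖,
    (P 1 - B 1) / ‖P - B‖,
    ((Pf 0 - P 0) * (B 1 - P 1) - (Pf 1 - P 1) * (B 0 - P 0)) / ‖P - B‖]

/-- Algebraic core of the 1+1 analysis. -/
lemma core_alg (a0 a1 b0 b1 g0 g1 h0 h1 r s : ℝ) (hr : 0 < r) (hs : 0 < s)
    (hr2 : r^2 = a0^2 + a1^2) (hs2 : s^2 = b0^2 + b1^2) :
    (∃ t : ℝ, t * (b0/s) = a0/r ∧ t * (b1/s) = a1/r ∧
        t * ((b0*g1 - b1*g0)/s) = (a0*h1 - a1*h0)/r) ↔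
    (a0*b1 - a1*b0 = 0 ∧ a0*(h1-g1) - a1*(h0-g0) = 0) := by
  have hrne : r ≠ 0 := hr.ne'
  have hsne : s ≠ 0 := hs.ne'
  constructor
  · rintro ⟨t, e1, e2, e3⟩
    have E1 : t * b0 * r = a0 * s := by field_simp at e1; linarith [e1]
    have E2 : t * b1 * r = a1 * s := by field_simp at e2; linarith [e2]
    have E3 : t * (b0*g1 - b1*g0) * r = (a0*h1 - a1*h0) * s := by
      field_simp at e3; linarith [e3]
    have ht : t ≠ 0 := by
      rintro rfl
      have ha0 : a0 = 0 := by
        have : a0 * s = 0 := by linarith [E1]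
        exact (mul_eq_zero.mp this).resolve_right hsne
      have ha1 : a1 = 0 := by
        have : a1 * s = 0 := by linarith [E2]
        exact (mul_eq_zero.mp this).resolve_right hsne
      nlinarith [hr2, hr]
    constructor
    · have key : (a0*b1 - a1*b0) * (t*r) = 0 := by linear_combination a0 * E2 - a1 * E1
      exact (mul_eq_zero.mp key).resolve_right (mul_ne_zero ht hrne)
    · have key : (a0*(h1-g1) - a1*(h0-g0)) * s = 0 := by
        linear_combination g1 * E1 - g0 * E2 - E3
      exact (mul_eq_zero.mp key).resolve_right hsne
  · rintro ⟨e1, e2⟩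
    refine ⟨(a0*b0 + a1*b1)/(r*s), ?_, ?_, ?_⟩
    · field_simp
      linear_combination (-(b1)) * e1 - (a0) * hs2
    · field_simp
      linear_combination (b0) * e1 - (a1) * hs2
    · field_simp
      linear_combination (-(a0*h1-a1*h0)) * hs2 + (-(b0^2+b1^2)) * e2 + (-(b0*g0+b1*g1)) * e1

/-- If the cross product of `a` and `w` vanishes and `a ≠ 0`, then `w` is a multiple of `a`. -/
lemma exists_smul_of_cross (a w : EuclideanSpace ℝ (Fin 2))
    (ha : a 0 ≠ 0 ∨ a 1 ≠ 0)
    (h : a 0 * w 1 - a 1 * w 0 = 0) : ∃ c : ℝ, w = c • a := by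
  rcases ha with ha | ha
  · refine ⟨w 0 / a 0, PiLp.ext fun i => ?_⟩
    fin_cases i <;> simp [PiLp.smul_apply, smul_eq_mul] <;> field_simp
    linear_combination h
  · refine ⟨w 1 / a 1, PiLp.ext fun i => ?_⟩
    fin_cases i <;> simp [PiLp.smul_apply, smul_eq_mul] <;> field_simp
    linear_combination -h

/-- Collinearity of the four points expressed via cross products. -/
lemma collinear_iff_cross (B1 B2 P0 P1 : EuclideanSpace ℝ (Fin 2))
    (ha : (P0 0 - B1 0) ≠ 0 ∨ (P0 1 - B1 1) ≠ 0) :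
    Collinear ℝ ({B1, P0, B2, P1} : Set (EuclideanSpace ℝ (Fin 2))) ↔
      ((P0 0 - B1 0) * (P1 1 - B2 1) - (P0 1 - B1 1) * (P1 0 - B2 0) = 0 ∧
       (P0 0 - B1 0) * (B2 1 - B1 1) - (P0 1 - B1 1) * (B2 0 - B1 0) = 0) := by
  rw [collinear_iff_of_mem (show B1 ∈ ({B1, P0, B2, P1} : Set _) by simp)]
  constructor
  · rintro ⟨v, hv⟩
    obtain ⟨c1, hc1⟩ := hv P0 (by simp)
    obtain ⟨c2, hc2⟩ := hv B2 (by simp)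
    obtain ⟨c3, hc3⟩ := hv P1 (by simp)
    rw [vadd_eq_add] at hc1 hc2 hc3
    have e10 : P0 0 - B1 0 = c1 * v 0 := by rw [hc1]; simp
    have e11 : P0 1 - B1 1 = c1 * v 1 := by rw [hc1]; simp
    have e20 : B2 0 - B1 0 = c2 * v 0 := by rw [hc2]; simp
    have e21 : B2 1 - B1 1 = c2 * v 1 := by rw [hc2]; simp
    have e30 : P1 0 - B1 0 = c3 * v 0 := by rw [hc3]; simp
    have e31 : P1 1 - B1 1 = c3 * v 1 := by rw [hc3]; simp
    constructor
    · have f0 : P1 0 - B2 0 = (c3 - c2) * v 0 := by linarith [e30, e20]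
      have f1 : P1 1 - B2 1 = (c3 - c2) * v 1 := by linarith [e31, e21]
      rw [e10, e11, f0, f1]; ring
    · rw [e10, e11, e20, e21]; ring
  · rintro ⟨e1, e2⟩
    set a : EuclideanSpace ℝ (Fin 2) := P0 - B1 with hadef
    have hax : a 0 = P0 0 - B1 0 := by simp [hadef]
    have hay : a 1 = P0 1 - B1 1 := by simp [hadef]
    have ha' : a 0 ≠ 0 ∨ a 1 ≠ 0 := by rw [hax, hay]; exact ha
    obtain ⟨c2, hc2⟩ := exists_smul_of_cross a (B2 - B1) ha' (by
      simp only [hax, hay, PiLp.sub_apply]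
      linear_combination e2)
    obtain ⟨cb, hcb⟩ := exists_smul_of_cross a (P1 - B2) ha' (by
      simp only [hax, hay, PiLp.sub_apply]
      linear_combination e1)
    refine ⟨a, ?_⟩
    intro p hp
    simp only [Set.mem_insert_iff, Set.mem_singleton_iff] at hp
    rcases hp with rfl | rfl | rfl | rfl
    · exact ⟨0, by simp⟩
    · exact ⟨1, by rw [vadd_eq_add, one_smul, hadef]; abel⟩
    · exact ⟨c2, by rw [vadd_eq_add, ← hc2]; abel⟩
    · refine ⟨c2 + cb, ?_⟩
      rw [vadd_eq_add, add_smul, ← hc2, ← hcb]; abel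

/-- 1+1 local analysis: the two information vectors are linearly dependent iff the two
anchors and the two measurement points all lie on one common line. -/
theorem one_plus_one_dependent_iff_collinear
    (B1 B2 Pf P0 P1 : EuclideanSpace ℝ (Fin 2)) (h0 : P0 ≠ B1) (h1 : P1 ≠ B2) :
    ¬ LinearIndependent ℝ ![gamma B1 P0 Pf, gamma B2 P1 Pf] ↔
      Collinear ℝ ({B1, P0, B2, P1} : Set (EuclideanSpace ℝ (Fin 2))) := by
  have hr : (0:ℝ) < ‖P0 - B1‖ := norm_pos_iff.mpr (sub_ne_zero.mpr h0)
  have hs : (0:ℝ) < ‖P1 - B2‖ := norm_pos_iff.mpr (sub_ne_zero.mpr h1)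
  have hr2 : ‖P0 - B1‖^2 = (P0 0 - B1 0)^2 + (P0 1 - B1 1)^2 := by
    rw [EuclideanSpace.norm_eq, Real.sq_sqrt (by positivity)]
    simp [Fin.sum_univ_two, Real.norm_eq_abs, sq_abs]
  have hs2 : ‖P1 - B2‖^2 = (P1 0 - B2 0)^2 + (P1 1 - B2 1)^2 := by
    rw [EuclideanSpace.norm_eq, Real.sq_sqrt (by positivity)]
    simp [Fin.sum_univ_two, Real.norm_eq_abs, sq_abs]
  have ha : (P0 0 - B1 0) ≠ 0 ∨ (P0 1 - B1 1) ≠ 0 := by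
    by_contra hc
    push_neg at hc
    apply h0
    have hz : P0 - B1 = 0 := by
      ext i
      fin_cases i
      · simpa using hc.1
      · simpa using hc.2
    exact sub_eq_zero.mp hz
  have hb : (P1 0 - B2 0) ≠ 0 ∨ (P1 1 - B2 1) ≠ 0 := by
    by_contra hc
    push_neg at hc
    apply h1
    have hz : P1 - B2 = 0 := by
      ext i
      fin_cases i
      · simpa using hc.1
      · simpa using hc.2
    exact sub_eq_zero.mp hz
  -- rewrite the gammas into a normalized form
  have hg0 : gamma B1 P0 Pf =
      ![(P0 0 - B1 0)/‖P0 - B1‖, (P0 1 - B1 1)/‖P0 - B1‖,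
        ((P0 0 - B1 0)*(Pf 1 - B1 1) - (P0 1 - B1 1)*(Pf 0 - B1 0))/‖P0 - B1‖] := by
    funext i
    fin_cases i <;> simp only [gamma, Matrix.cons_val_zero, Matrix.cons_val_one,
      Matrix.head_cons, Matrix.cons_val_two, Matrix.tail_cons] <;> ring
  have hg1 : gamma B2 P1 Pf =
      ![(P1 0 - B2 0)/‖P1 - B2‖, (P1 1 - B2 1)/‖P1 - B2‖,
        ((P1 0 - B2 0)*(Pf 1 - B2 1) - (P1 1 - B2 1)*(Pf 0 - B2 0))/‖P1 - B2‖] := by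
    funext i
    fin_cases i <;> simp only [gamma, Matrix.cons_val_zero, Matrix.cons_val_one,
      Matrix.head_cons, Matrix.cons_val_two, Matrix.tail_cons] <;> ring
  have hγ1ne : gamma B2 P1 Pf ≠ 0 := by
    intro hz
    rw [hg1] at hz
    have z0 := congrFun hz 0
    have z1 := congrFun hz 1
    simp only [Matrix.cons_val_zero, Matrix.cons_val_one, Matrix.head_cons,
      Pi.zero_apply, div_eq_zero_iff] at z0 z1
    rcases hb with hb | hb
    · rcases z0 with h | h
      · exact hb h
      · exact hs.ne' h
    · rcases z1 with h | h
      · exact hb h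
      · exact hs.ne' h
  have hli : ¬ LinearIndependent ℝ ![gamma B1 P0 Pf, gamma B2 P1 Pf] ↔
      ∃ t : ℝ, t • gamma B2 P1 Pf = gamma B1 P0 Pf := by
    rw [linearIndependent_fin2]
    simp only [Matrix.cons_val_zero, Matrix.cons_val_one, Matrix.head_cons]
    constructor
    · intro h
      rcases not_and_or.mp h with h | h
      · exact absurd (not_not.mp h) hγ1ne
      · push_neg at h
        exact h
    · rintro ⟨t, ht⟩ h
      exact h.2 t ht
  have hcomp : (∃ t : ℝ, t • gamma B2 P1 Pf = gamma B1 P0 Pf) ↔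
      ∃ t : ℝ,
        t * ((P1 0 - B2 0)/‖P1 - B2‖) = (P0 0 - B1 0)/‖P0 - B1‖ ∧
        t * ((P1 1 - B2 1)/‖P1 - B2‖) = (P0 1 - B1 1)/‖P0 - B1‖ ∧
        t * (((P1 0 - B2 0)*(Pf 1 - B2 1) - (P1 1 - B2 1)*(Pf 0 - B2 0))/‖P1 - B2‖) =
          ((P0 0 - B1 0)*(Pf 1 - B1 1) - (P0 1 - B1 1)*(Pf 0 - B1 0))/‖P0 - B1‖ := by
    rw [hg0, hg1]
    constructor
    · rintro ⟨t, ht⟩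
      refine ⟨t, ?_, ?_, ?_⟩
      · have := congrFun ht 0
        simpa using this
      · have := congrFun ht 1
        simpa using this
      · have := congrFun ht 2
        simpa using this
    · rintro ⟨t, h1', h2', h3'⟩
      refine ⟨t, funext fun i => ?_⟩
      fin_cases i <;> simpa using (by assumption : _)
  rw [hli, hcomp,
    core_alg (P0 0 - B1 0) (P0 1 - B1 1) (P1 0 - B2 0) (P1 1 - B2 1)
      (Pf 0 - B2 0) (Pf 1 - B2 1) (Pf 0 - B1 0) (Pf 1 - B1 1)
      ‖P0 - B1‖ ‖P1 - B2‖ hr hs hr2 hs2,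
    collinear_iff_cross B1 B2 P0 P1 ha]
  constructor
  · rintro ⟨u, v⟩
    exact ⟨u, by linear_combination v⟩
  · rintro ⟨u, v⟩
    exact ⟨u, by linear_combination v⟩
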